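/- (Lemma: total investment received is at most level times cost) Let P be a finite type, L : P → ℕ a level function with L(p) ≥ 1 for all p, c : P → ℝ with c(p) > 0 for all p, and w : P → P → ℝ a direct-investment weight with w(p,q) ≥ 0 for all p, q, such that w(p,q) > 0 implies L(p) < L(q), and such that for every q, Σ_{p} w(p,q) ≤ c(q). Define I : P → ℝ by strong recursion on the level: I(q) = c(q) + Σ_{p with L(p) < L(q)} (I(p)/c(p))·w(p,q). Then I(q) ≤ L(q)·c(q) for every q. -/

import Mathlib

open Classical

/-- **Lemma (total investment received is at most level times cost)**: on a finite type
`P` with a level function `L ≥ 1`, positive costs `c`, and nonnegative direct-investment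
weights `w` flowing only from strictly lower levels to strictly higher levels and with
total incoming weight at any `q` at most `c q`, the total investment
`I q = c q + ∑_{L p < L q} (I p / c p) * w p q` (defined by strong recursion on the
level) satisfies `I q ≤ L q * c q` for every `q`. -/
theorem total_investment_received_le_level_mul_cost
    {P : Type} [Fintype P] (L : P → ℕ) (c : P → ℝ) (w : P → P → ℝ)
    (hL : ∀ p, 1 ≤ L p) (hc : ∀ p, 0 < c p)
    (hw : ∀ p q, 0 ≤ w p q) (hlev : ∀ p q, 0 < w p q → L p < L q)
    (hin : ∀ q, ∑ p, w p q ≤ c q)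
    (I : P → ℝ)
    (hI : ∀ q, I q = c q +
      ∑ p ∈ Finset.univ.filter (fun p => L p < L q), (I p / c p) * w p q) :
    ∀ q, I q ≤ (L q : ℝ) * c q := by
  suffices h : ∀ n q, L q = n → I q ≤ (L q : ℝ) * c q from fun q => h (L q) q rfl
  intro n
  induction n using Nat.strong_induction_on with
  | _ n ih =>
  intro q hn
  subst hn
  rw [hI q]
  have hstep : ∀ p ∈ Finset.univ.filter (fun p => L p < L q),
      (I p / c p) * w p q ≤ ((L q : ℝ) - 1) * w p q := by
    intro p hp
    have hpq : L p < L q := (Finset.mem_filter.mp hp).2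
    have hIp : I p ≤ (L p : ℝ) * c p := ih (L p) hpq p rfl
    have h1 : I p / c p ≤ (L p : ℝ) := by
      rw [div_le_iff₀ (hc p)]; exact hIp
    have h2 : (L p : ℝ) ≤ (L q : ℝ) - 1 := by
      have : L p + 1 ≤ L q := hpq
      have := (Nat.cast_le (α := ℝ)).mpr this
      push_cast at this ⊢
      linarith
    exact mul_le_mul_of_nonneg_right (h1.trans h2) (hw p q)
  calc c q + ∑ p ∈ Finset.univ.filter (fun p => L p < L q), (I p / c p) * w p q
      ≤ c q + ∑ p ∈ Finset.univ.filter (fun p => L p < L q), ((L q : ℝ) - 1) * w p q :=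
        add_le_add_right (Finset.sum_le_sum hstep) _
    _ = c q + ((L q : ℝ) - 1) * ∑ p ∈ Finset.univ.filter (fun p => L p < L q), w p q := by
        rw [Finset.mul_sum]
    _ ≤ c q + ((L q : ℝ) - 1) * c q := by
        gcongr
        · have : (1 : ℝ) ≤ (L q : ℝ) := by exact_mod_cast hL q
          linarith
        · calc ∑ p ∈ Finset.univ.filter (fun p => L p < L q), w p q
              ≤ ∑ p, w p q := Finset.sum_le_sum_of_subset_of_nonneg
                (Finset.filter_subset _ _) (fun p _ _ => hw p q)
            _ ≤ c q := hin q
    _ = (L q : ℝ) * c q := by ring
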